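/- Let q₁, …, qₙ ≥ 2 be pairwise coprime integers with N = q₁⋯qₙ, and let 2 ≤ K ≤ N. The minimum weighted distance of the Chinese Remainder code CR(q, K) equals min{wt(I) : I ⊆ {1,…,n}, K · wt(I) > N}, where wt(I) = ∏_{i∈I} qᵢ. -/

import Mathlib

/-- The weight of a set `I` of coordinates: the product of the moduli indexed by `I`. -/
def wtS {ι : Type} (q : ι → ℕ) (I : Finset ι) : ℕ := ∏ i ∈ I, q i

/-- The weighted distance between two vectors of `ℤ/q₁ℤ × ⋯ × ℤ/qₙℤ`. -/
def wdist {ι : Type} [Fintype ι] (q : ι → ℕ) (a b : ∀ i : ι, ZMod (q i)) : ℕ :=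
  ∏ i ∈ Finset.univ.filter (fun i => a i ≠ b i), q i

/-- The minimum weighted distance of an integer code `C ⊆ ℤ/q₁ℤ × ⋯ × ℤ/qₙℤ`. -/
noncomputable def minDist {ι : Type} [Fintype ι] (q : ι → ℕ)
    (C : Finset (∀ i : ι, ZMod (q i))) : ℕ :=
  sInf {d : ℕ | ∃ a ∈ C, ∃ b ∈ C, a ≠ b ∧ d = wdist q a b}

/-- The Chinese Remainder code: residue vectors of the integers `0 ≤ x < K`. -/
def CRcode {ι : Type} [Fintype ι] [DecidableEq ι] (q : ι → ℕ) (K : ℕ) :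
    Finset (∀ i : ι, ZMod (q i)) :=
  (Finset.range K).image (fun x => fun i => (x : ZMod (q i)))

lemma aux_prod_dvd {n : ℕ} (q : Fin n → ℕ)
    (hcop : ∀ i j : Fin n, i ≠ j → Nat.Coprime (q i) (q j))
    (J : Finset (Fin n)) (m : ℕ) (h : ∀ j ∈ J, q j ∣ m) : (∏ j ∈ J, q j) ∣ m := by
  induction J using Finset.induction with
  | empty => simpa using one_dvd m
  | @insert i J hi ih =>
    rw [Finset.prod_insert hi]
    refine Nat.Coprime.mul_dvd_of_dvd_of_dvd ?_ (h i (Finset.mem_insert_self i J))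
      (ih fun j hj => h j (Finset.mem_insert_of_mem hj))
    exact Nat.Coprime.prod_right fun j hj => hcop i j (fun e => hi (e ▸ hj))

lemma aux_dist {n : ℕ} (q : Fin n → ℕ) (hq : ∀ i, 2 ≤ q i)
    (hcop : ∀ i j : Fin n, i ≠ j → Nat.Coprime (q i) (q j))
    (K : ℕ) (x y : ℕ) (hxy : x < y) (hy : y < K) :
    ∃ I : Finset (Fin n), (∏ i, q i) < K * wtS q I ∧
      wdist q (fun i => (x : ZMod (q i))) (fun i => (y : ZMod (q i))) = wtS q I := by
  classical
  set I : Finset (Fin n) := Finset.univ.filter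
    (fun i => (x : ZMod (q i)) ≠ (y : ZMod (q i))) with hI
  refine ⟨I, ?_, rfl⟩
  have hdvd : ∀ j ∈ Iᶜ, q j ∣ y - x := by
    intro j hj
    simp only [hI, Finset.mem_compl, Finset.mem_filter, Finset.mem_univ, true_and,
      not_not] at hj
    have := (ZMod.natCast_eq_natCast_iff x y (q j)).mp hj
    exact (Nat.modEq_iff_dvd' hxy.le).mp this
  have hprod : (∏ j ∈ Iᶜ, q j) ∣ y - x := aux_prod_dvd q hcop _ _ hdvd
  have hpos : 0 < y - x := Nat.sub_pos_of_lt hxy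
  have hle : (∏ j ∈ Iᶜ, q j) ≤ y - x := Nat.le_of_dvd hpos hprod
  have hlt : (∏ j ∈ Iᶜ, q j) < K := lt_of_le_of_lt hle (lt_of_le_of_lt (Nat.sub_le y x) hy)
  have hsplit : (∏ i, q i) = wtS q I * ∏ j ∈ Iᶜ, q j := (Finset.prod_mul_prod_compl I q).symm
  have hIpos : 0 < wtS q I := Finset.prod_pos fun i _ => lt_of_lt_of_le two_pos (hq i)
  calc (∏ i, q i) = wtS q I * ∏ j ∈ Iᶜ, q j := hsplit
    _ < wtS q I * K := mul_lt_mul_of_pos_left hlt hIpos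
    _ = K * wtS q I := Nat.mul_comm _ _

theorem statement3 {n : ℕ} (hn : 1 ≤ n) (q : Fin n → ℕ) (hq : ∀ i, 2 ≤ q i)
    (hcop : ∀ i j : Fin n, i ≠ j → Nat.Coprime (q i) (q j))
    (K : ℕ) (hK2 : 2 ≤ K) (hKN : K ≤ ∏ i, q i) :
    minDist q (CRcode q K) =
      sInf {w : ℕ | ∃ I : Finset (Fin n), (∏ i, q i) < K * wtS q I ∧ w = wtS q I} := by
  classical
  unfold minDist
  congr 1
  ext d
  simp only [Set.mem_setOf_eq]
  constructor
  · rintro ⟨a, ha, b, hb, hab, rfl⟩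
    simp only [CRcode, Finset.mem_image, Finset.mem_range] at ha hb
    obtain ⟨x, hx, rfl⟩ := ha
    obtain ⟨y, hy, rfl⟩ := hb
    have hxy : x ≠ y := fun e => hab (by rw [e])
    rcases hxy.lt_or_gt with h | h
    · obtain ⟨I, h1, h2⟩ := aux_dist q hq hcop K x y h hy
      exact ⟨I, h1, h2⟩
    · obtain ⟨I, h1, h2⟩ := aux_dist q hq hcop K y x h hx
      refine ⟨I, h1, ?_⟩
      rw [← h2]
      unfold wdist
      congr 1
      ext i
      simp [ne_comm]
  · rintro ⟨I, hI, rfl⟩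
    have hIne : I.Nonempty := by
      rcases I.eq_empty_or_nonempty with rfl | h
      · exfalso
        simp only [wtS, Finset.prod_empty, mul_one] at hI
        exact absurd hKN (not_le.mpr hI)
      · exact h
    set y : ℕ := ∏ j ∈ Iᶜ, q j with hy
    have hsplit : (∏ i, q i) = wtS q I * y := (Finset.prod_mul_prod_compl I q).symm
    have hIpos : 0 < wtS q I := Finset.prod_pos fun i _ => lt_of_lt_of_le two_pos (hq i)
    have hyK : y < K := by
      by_contra hc
      push_neg at hc
      have h2 : wtS q I * K ≤ wtS q I * y := Nat.mul_le_mul_left _ hc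
      rw [hsplit, mul_comm K] at hI
      exact absurd hI (not_lt.mpr h2)
    have hypos : 0 < y := Finset.prod_pos fun i _ => lt_of_lt_of_le two_pos (hq i)
    refine ⟨fun i => ((0 : ℕ) : ZMod (q i)), ?_, fun i => (y : ZMod (q i)), ?_, ?_, ?_⟩
    · simp only [CRcode, Finset.mem_image, Finset.mem_range]
      exact ⟨0, by omega, rfl⟩
    · simp only [CRcode, Finset.mem_image, Finset.mem_range]
      exact ⟨y, hyK, rfl⟩
    · obtain ⟨i, hi⟩ := hIne
      have hndvd : ¬ q i ∣ y := by
        intro hdvd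
        have hcop' : Nat.Coprime (q i) y :=
          Nat.Coprime.prod_right fun j hj =>
            hcop i j (fun e => (Finset.mem_compl.mp hj) (e ▸ hi))
        have h1 : q i ∣ 1 := hcop' ▸ Nat.dvd_gcd dvd_rfl hdvd
        have := hq i
        have := Nat.le_of_dvd one_pos h1
        omega
      intro hcontra
      apply hndvd
      have := congrFun hcontra i
      simp only [Nat.cast_zero] at this
      have : (y : ZMod (q i)) = 0 := this.symm
      exact (ZMod.natCast_eq_zero_iff y (q i)).mp this
    · unfold wdist wtS
      congr 1
      ext i
      simp only [Finset.mem_filter, Finset.mem_univ, true_and, Nat.cast_zero]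
      constructor
      · intro hiI h
        have hd : q i ∣ y := (ZMod.natCast_eq_zero_iff y (q i)).mp h.symm
        have hcop' : Nat.Coprime (q i) y :=
          Nat.Coprime.prod_right fun j hj =>
            hcop i j (fun e => (Finset.mem_compl.mp hj) (e ▸ hiI))
        have h1 : q i ∣ 1 := hcop' ▸ Nat.dvd_gcd dvd_rfl hd
        have := hq i
        have := Nat.le_of_dvd one_pos h1
        omega
      · intro h
        by_contra hiI
        have hiC : i ∈ Iᶜ := Finset.mem_compl.mpr hiI
        have : q i ∣ y := Finset.dvd_prod_of_mem q hiC
        exact h (((ZMod.natCast_eq_zero_iff y (q i)).mpr this).symm)
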